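/- There exist a matrix A ∈ GL(n+1, ℂ), a strictly increasing sequence of integers 1 = l_0 < 2 = l_1 < l_2 < ⋯ < l_{n−2}, and formal power series g_0, g_1, …, g_{n−2} ∈ ℂ[[z]] such that for each i the order of g_i is exactly l_i and the coefficient of z^{l_i} in g_i equals 1, and such that A·v = (1, z, g_0(z^k), g_1(z^k), …, g_{n−2}(z^k)) as a vector of formal power series, where g_i(z^k) denotes the substitution of z^k into g_i. (This is the normal form of the standard embedding of a generalized Fermat curve at a fixed point of its generalized Fermat group.) -/

import Mathlib

noncomputable def genBinom (x : ℂ) (i : ℕ) : ℂ :=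
  (∏ m ∈ Finset.range i, (x - (m : ℂ))) / (Nat.factorial i : ℂ)

lemma genBinom_zero (x : ℂ) : genBinom x 0 = 1 := by simp [genBinom]

lemma genBinom_ne_zero {k : ℕ} (hk : 2 ≤ k) (i : ℕ) : genBinom ((k : ℂ))⁻¹ i ≠ 0 := by
  have hk0 : (k : ℂ) ≠ 0 := Nat.cast_ne_zero.2 (by omega)
  unfold genBinom
  apply div_ne_zero
  · rw [Finset.prod_ne_zero_iff]
    intro m _ h
    have h1 : (k : ℂ)⁻¹ = (m : ℂ) := by linear_combination h
    have h2 : ((1 : ℕ) : ℂ) = ((k * m : ℕ) : ℂ) := by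
      push_cast
      rw [← h1]
      field_simp
    have h3 : (1 : ℕ) = k * m := Nat.cast_injective h2
    have : k * m = 1 := h3.symm
    have := Nat.le_of_dvd one_pos ⟨m, this.symm⟩
    omega
  · exact Nat.cast_ne_zero.2 (Nat.factorial_ne_zero i)

def fidx (n : ℕ) (hn : 3 ≤ n) (t : ℕ) : Fin (n - 1) :=
  ⟨t % (n - 1), Nat.mod_lt _ (by omega)⟩

lemma fidx_coe (n : ℕ) (hn : 3 ≤ n) (t : Fin (n - 1)) : fidx n hn (t : ℕ) = t :=
  Fin.ext (Nat.mod_eq_of_lt t.isLt)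

lemma fidx_val (n : ℕ) (hn : 3 ≤ n) {t : ℕ} (ht : t < n - 1) : (fidx n hn t : ℕ) = t :=
  Nat.mod_eq_of_lt ht

noncomputable def Mm (n k : ℕ) (lam : ℕ → ℂ) : Matrix (Fin (n - 1)) (Fin (n - 1)) ℂ :=
  Matrix.of fun j m => (lam (j : ℕ))⁻¹ ^ ((m : ℕ) + 1) * genBinom ((k : ℂ))⁻¹ ((m : ℕ) + 1)

lemma Mm_eq (n k : ℕ) (lam : ℕ → ℂ) :
    Mm n k lam =
      Matrix.diagonal (fun j : Fin (n - 1) => (lam (j : ℕ))⁻¹) *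
        (Matrix.vandermonde fun j : Fin (n - 1) => (lam (j : ℕ))⁻¹) *
        Matrix.diagonal (fun m : Fin (n - 1) => genBinom ((k : ℂ))⁻¹ ((m : ℕ) + 1)) := by
  ext j m
  rw [Matrix.mul_diagonal, Matrix.diagonal_mul]
  simp only [Mm, Matrix.of_apply, Matrix.vandermonde]
  ring

lemma Mm_det_isUnit {n k : ℕ} (hn : 3 ≤ n) (hk : 2 ≤ k) {lam : ℕ → ℂ}
    (h0 : ∀ t, t < n - 1 → lam t ≠ 0)
    (hinj : ∀ i j, i < n - 1 → j < n - 1 → lam i = lam j → i = j) :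
    IsUnit (Mm n k lam).det := by
  rw [isUnit_iff_ne_zero, Mm_eq, Matrix.det_mul, Matrix.det_mul, Matrix.det_diagonal,
    Matrix.det_diagonal, Matrix.det_vandermonde]
  apply mul_ne_zero
  apply mul_ne_zero
  · rw [Finset.prod_ne_zero_iff]
    intro j _
    exact inv_ne_zero (h0 _ j.isLt)
  · rw [Finset.prod_ne_zero_iff]
    intro i _
    rw [Finset.prod_ne_zero_iff]
    intro j hj
    rw [sub_ne_zero]
    intro h
    have hij : lam (j : ℕ) = lam (i : ℕ) := inv_injective h
    have heq := hinj _ _ j.isLt i.isLt hij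
    have hlt : i < j := Finset.mem_Ioi.mp hj
    have : (i : ℕ) < (j : ℕ) := hlt
    omega
  · rw [Finset.prod_ne_zero_iff]
    intro m _
    exact genBinom_ne_zero hk _

noncomputable def Bmat (k n : ℕ) (hn : 3 ≤ n) (lam : ℕ → ℂ) (i t : ℕ) : ℂ :=
  (Mm n k lam)⁻¹ (fidx n hn i) (fidx n hn t)

noncomputable def Sval (k n : ℕ) (hn : 3 ≤ n) (lam : ℕ → ℂ) (i : ℕ) : ℂ :=
  ∑ j : Fin (n - 1), (Mm n k lam)⁻¹ (fidx n hn i) j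

noncomputable def Arow (k n : ℕ) (hn : 3 ≤ n) (lam ρ : ℕ → ℂ) (r s : ℕ) : ℂ :=
  if r = 0 then (if s = 0 then 1 else 0)
  else if r = 1 then (if s = 1 then 1 else 0)
  else if s = 0 then -(Sval k n hn lam (r - 2))
  else if s = 1 then 0
  else Bmat k n hn lam (r - 2) (s - 2) * (ρ (s - 1))⁻¹

noncomputable def Arow' (k n : ℕ) (hn : 3 ≤ n) (lam ρ : ℕ → ℂ) (r s : ℕ) : ℂ :=
  if r = 0 then (if s = 0 then 1 else 0)
  else if r = 1 then (if s = 1 then 1 else 0)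
  else if s = 0 then ρ (r - 1)
  else if s = 1 then 0
  else ρ (r - 1) * Mm n k lam (fidx n hn (r - 2)) (fidx n hn (s - 2))

noncomputable def gser (k n : ℕ) (hn : 3 ≤ n) (lam : ℕ → ℂ) (i : ℕ) : PowerSeries ℂ :=
  PowerSeries.mk fun q => if q = 0 then 0
    else (∑ t : Fin (n - 1), Bmat k n hn lam i (t : ℕ) * (lam (t : ℕ))⁻¹ ^ q) *
      genBinom ((k : ℂ))⁻¹ q

noncomputable def Gser (k n : ℕ) (hn : 3 ≤ n) (lam : ℕ → ℂ) (i : ℕ) : PowerSeries ℂ :=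
  PowerSeries.mk fun m => if k ∣ m then PowerSeries.coeff (m / k) (gser k n hn lam i) else 0

theorem stmt_0 (k n : ℕ) (hk : 2 ≤ k) (hn : 3 ≤ n)
    (lam : ℕ → ℂ) (hlam0 : lam 0 = 1)
    (hlam_ne0 : ∀ i, 1 ≤ i → i ≤ n - 2 → lam i ≠ 0)
    (hlam_ne1 : ∀ i, 1 ≤ i → i ≤ n - 2 → lam i ≠ 1)
    (hlam_inj : ∀ i j, i ≤ n - 2 → j ≤ n - 2 → lam i = lam j → i = j)
    (ρ : ℕ → ℂ) (hρ : ∀ j, 1 ≤ j → j ≤ n - 1 → ρ j ^ k = - lam (j - 1))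
    (c : ℕ → ℕ → ℂ)
    (hc : ∀ i j, c i j = ρ j * (lam (j - 1))⁻¹ ^ i * genBinom ((k : ℂ))⁻¹ i)
    (v : ℕ → PowerSeries ℂ)
    (hv0 : v 0 = 1) (hv1 : v 1 = PowerSeries.X)
    (hv : ∀ j, 1 ≤ j → j ≤ n - 1 → ∀ m,
      PowerSeries.coeff m (v (j + 1)) = if k ∣ m then c (m / k) j else 0) :
    ∃ (A : Matrix.GeneralLinearGroup (Fin (n + 1)) ℂ) (l : ℕ → ℕ)
      (g G : ℕ → PowerSeries ℂ),
      l 0 = 1 ∧ l 1 = 2 ∧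
      (∀ i, i < n - 2 → l i < l (i + 1)) ∧
      (∀ i, i ≤ n - 2 → (g i).order = l i) ∧
      (∀ i, i ≤ n - 2 → PowerSeries.coeff (l i) (g i) = 1) ∧
      (∀ i, i ≤ n - 2 → ∀ m, PowerSeries.coeff m (G i) =
        if k ∣ m then PowerSeries.coeff (m / k) (g i) else 0) ∧
      (∀ r : Fin (n + 1), ∑ s : Fin (n + 1), A.val r s • v (s : ℕ) =
        if (r : ℕ) = 0 then 1
        else if (r : ℕ) = 1 then PowerSeries.X
        else G ((r : ℕ) - 2)) := by
  classical
  have lam_ne : ∀ t, t < n - 1 → lam t ≠ 0 := by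
    intro t ht
    rcases Nat.eq_zero_or_pos t with rfl | h
    · rw [hlam0]; exact one_ne_zero
    · exact hlam_ne0 t h (by omega)
  have lam_inj : ∀ i j, i < n - 1 → j < n - 1 → lam i = lam j → i = j := fun i j hi hj h =>
    hlam_inj i j (by omega) (by omega) h
  have hdet := Mm_det_isUnit hn hk lam_ne lam_inj
  have hMM : (Mm n k lam)⁻¹ * Mm n k lam = 1 := Matrix.nonsing_inv_mul _ hdet
  have key : ∀ i m : Fin (n - 1),
      (∑ t : Fin (n - 1), (Mm n k lam)⁻¹ i t * Mm n k lam t m) = if i = m then 1 else 0 := by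
    intro i m
    rw [← Matrix.mul_apply, hMM, Matrix.one_apply]
  have rho_ne : ∀ j, 1 ≤ j → j ≤ n - 1 → ρ j ≠ 0 := by
    intro j h1 h2 h
    have h3 := hρ j h1 h2
    rw [h, zero_pow (by omega)] at h3
    have h4 : lam (j - 1) = 0 := neg_eq_zero.mp h3.symm
    exact lam_ne (j - 1) (by omega) h4
  -- g coefficient facts
  have hg0 : ∀ i, PowerSeries.coeff 0 (gser k n hn lam i) = 0 := by
    intro i; simp [gser]
  have hgq : ∀ i q, q ≠ 0 → PowerSeries.coeff q (gser k n hn lam i) =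
      (∑ t : Fin (n - 1), Bmat k n hn lam i (t : ℕ) * (lam (t : ℕ))⁻¹ ^ q) *
        genBinom ((k : ℂ))⁻¹ q := by
    intro i q hq; simp [gser, hq]
  have hgdelta : ∀ i q, i < n - 1 → 1 ≤ q → q ≤ n - 1 →
      PowerSeries.coeff q (gser k n hn lam i) = if q = i + 1 then 1 else 0 := by
    intro i q hi h1 h2
    rw [hgq i q (by omega), Finset.sum_mul]
    have hm : q - 1 < n - 1 := by omega
    have hstep : ∀ t : Fin (n - 1),
        Bmat k n hn lam i (t : ℕ) * (lam (t : ℕ))⁻¹ ^ q * genBinom ((k : ℂ))⁻¹ q =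
        (Mm n k lam)⁻¹ (fidx n hn i) t * Mm n k lam t (fidx n hn (q - 1)) := by
      intro t
      rw [Bmat, fidx_coe]
      simp only [Mm, Matrix.of_apply, fidx_val n hn hm]
      rw [show q - 1 + 1 = q from by omega]
      ring
    rw [Finset.sum_congr rfl fun t _ => hstep t, key]
    have hiff : (fidx n hn i = fidx n hn (q - 1)) ↔ (q = i + 1) := by
      rw [Fin.ext_iff, fidx_val n hn hi, fidx_val n hn hm]
      omega
    by_cases h : q = i + 1
    · rw [if_pos (hiff.mpr h), if_pos h]
    · rw [if_neg (fun hh => h (hiff.mp hh)), if_neg h]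
  -- sum splitting helper
  have hsplit : ∀ F : ℕ → ℂ, ∑ t ∈ Finset.range (n + 1), F t
      = F 0 + F 1 + ∑ t ∈ Finset.range (n - 1), F (t + 2) := by
    intro F
    rw [show n + 1 = (n - 1) + 1 + 1 from by omega, Finset.sum_range_succ',
      Finset.sum_range_succ']
    have he : ∀ t ∈ Finset.range (n - 1), F (t + 1 + 1) = F (t + 2) := by
      intro t _; norm_num
    rw [Finset.sum_congr rfl he]
    ring
  have hSval : ∀ i, ∑ t ∈ Finset.range (n - 1), Bmat k n hn lam i t = Sval k n hn lam i := by
    intro i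
    rw [← Fin.sum_univ_eq_sum_range (fun t => Bmat k n hn lam i t) (n - 1)]
    unfold Sval Bmat
    exact Finset.sum_congr rfl fun t _ => by rw [fidx_coe]
  -- pointwise evaluation of the rows
  have hA'0 : ∀ s : ℕ, Arow' k n hn lam ρ 0 s = if s = 0 then 1 else 0 := by
    intro s; simp [Arow']
  have hA'1 : ∀ s : ℕ, Arow' k n hn lam ρ 1 s = if s = 1 then 1 else 0 := by
    intro s; simp [Arow']
  have hA'2 : ∀ t s : ℕ, Arow' k n hn lam ρ (t + 2) s =
      (if s = 0 then ρ (t + 1) else if s = 1 then 0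
        else ρ (t + 1) * Mm n k lam (fidx n hn t) (fidx n hn (s - 2))) := by
    intro t s
    simp only [Arow']
    rw [if_neg (by omega), if_neg (by omega), show t + 2 - 2 = t from by omega,
      show t + 2 - 1 = t + 1 from by omega]
  have hA0 : ∀ r s : ℕ, r = 0 → Arow k n hn lam ρ r s = if s = 0 then 1 else 0 := by
    intro r s hr; simp [Arow, hr]
  have hA1 : ∀ r s : ℕ, r ≠ 0 → r = 1 → Arow k n hn lam ρ r s = if s = 1 then 1 else 0 := by
    intro r s hr0 hr1; simp [Arow, hr0, hr1]
  have hA2 : ∀ r s : ℕ, r ≠ 0 → r ≠ 1 → Arow k n hn lam ρ r s =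
      (if s = 0 then -(Sval k n hn lam (r - 2)) else if s = 1 then 0
        else Bmat k n hn lam (r - 2) (s - 2) * (ρ (s - 1))⁻¹) := by
    intro r s hr0 hr1
    simp only [Arow]
    rw [if_neg hr0, if_neg hr1]
  have hcancel : ∀ a b x : ℂ, b ≠ 0 → a * b⁻¹ * (b * x) = a * x := by
    intro a b x hb; field_simp
  have hcancel3 : ∀ a b x y : ℂ, b ≠ 0 → a * b⁻¹ * (b * x * y) = a * x * y := by
    intro a b x y hb; field_simp
  -- the matrices
  set A : Matrix (Fin (n + 1)) (Fin (n + 1)) ℂ :=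
    Matrix.of (fun r s : Fin (n + 1) => Arow k n hn lam ρ (r : ℕ) (s : ℕ)) with hAdef
  set A' : Matrix (Fin (n + 1)) (Fin (n + 1)) ℂ :=
    Matrix.of (fun r s : Fin (n + 1) => Arow' k n hn lam ρ (r : ℕ) (s : ℕ)) with hA'def
  have hAA' : A * A' = 1 := by
    ext r s
    have hrlt := r.isLt
    have hslt := s.isLt
    rw [Matrix.mul_apply, Matrix.one_apply]
    have hconv : ∑ t : Fin (n + 1), A r t * A' t s
        = ∑ t ∈ Finset.range (n + 1),
            Arow k n hn lam ρ (r : ℕ) t * Arow' k n hn lam ρ t (s : ℕ) := by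
      rw [← Fin.sum_univ_eq_sum_range
        (fun t => Arow k n hn lam ρ (r : ℕ) t * Arow' k n hn lam ρ t (s : ℕ)) (n + 1)]
      rfl
    rw [hconv, hsplit]
    have hrs : (r = s) ↔ ((r : ℕ) = (s : ℕ)) := Fin.ext_iff
    by_cases hr0 : (r : ℕ) = 0
    · rw [hA0 _ _ hr0, hA0 _ _ hr0, hA'0, hA'1]
      have e2 : ∀ t ∈ Finset.range (n - 1),
          Arow k n hn lam ρ (r : ℕ) (t + 2) * Arow' k n hn lam ρ (t + 2) (s : ℕ) = 0 := by
        intro t _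
        rw [hA0 _ _ hr0, if_neg (by omega), zero_mul]
      rw [Finset.sum_congr rfl e2, Finset.sum_const_zero]
      by_cases hs : (s : ℕ) = 0
      · rw [if_pos rfl, if_pos hs, if_neg (by omega), if_pos (hrs.mpr (by omega))]; ring
      · have hne : ¬ (r = s) := by rw [hrs]; omega
        rw [if_pos rfl, if_neg hs, if_neg (by omega), if_neg hne]; ring
    · by_cases hr1 : (r : ℕ) = 1
      · rw [hA1 _ _ hr0 hr1, hA1 _ _ hr0 hr1, hA'0, hA'1]
        have e2 : ∀ t ∈ Finset.range (n - 1),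
            Arow k n hn lam ρ (r : ℕ) (t + 2) * Arow' k n hn lam ρ (t + 2) (s : ℕ) = 0 := by
          intro t _
          rw [hA1 _ _ hr0 hr1, if_neg (by omega), zero_mul]
        rw [Finset.sum_congr rfl e2, Finset.sum_const_zero]
        by_cases hs : (s : ℕ) = 1
        · rw [if_neg (by omega), if_pos rfl, if_pos hs, if_pos (hrs.mpr (by omega))]; ring
        · have hne : ¬ (r = s) := by rw [hrs]; omega
          rw [if_neg (by omega), if_pos rfl, if_neg hs, if_neg hne]; ring
      · -- r ≥ 2
        have hr2 : 2 ≤ (r : ℕ) := by omega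
        have e0 : Arow k n hn lam ρ (r : ℕ) 0 = -(Sval k n hn lam ((r : ℕ) - 2)) := by
          rw [hA2 _ _ hr0 hr1, if_pos rfl]
        have e1 : Arow k n hn lam ρ (r : ℕ) 1 = 0 := by
          rw [hA2 _ _ hr0 hr1, if_neg (by omega), if_pos rfl]
        rw [e0, e1, hA'0, hA'1, zero_mul]
        by_cases hs0 : (s : ℕ) = 0
        · have e2 : ∀ t ∈ Finset.range (n - 1),
              Arow k n hn lam ρ (r : ℕ) (t + 2) * Arow' k n hn lam ρ (t + 2) (s : ℕ)
              = Bmat k n hn lam ((r : ℕ) - 2) t := by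
            intro t ht
            have htlt : t < n - 1 := Finset.mem_range.mp ht
            have hρt : ρ (t + 1) ≠ 0 := rho_ne (t + 1) (by omega) (by omega)
            rw [hA2 _ _ hr0 hr1, hA'2, if_neg (by omega), if_neg (by omega), if_pos hs0]
            rw [show t + 2 - 2 = t from by omega, show t + 2 - 1 = t + 1 from by omega]
            rw [mul_assoc, inv_mul_cancel₀ hρt, mul_one]
          have hne : ¬ (r = s) := by rw [hrs]; omega
          rw [Finset.sum_congr rfl e2, hSval, if_pos hs0, if_neg hne]
          ring
        · by_cases hs1 : (s : ℕ) = 1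
          · have e2 : ∀ t ∈ Finset.range (n - 1),
                Arow k n hn lam ρ (r : ℕ) (t + 2) * Arow' k n hn lam ρ (t + 2) (s : ℕ) = 0 := by
              intro t _
              rw [hA'2, if_neg (by omega), if_pos hs1, mul_zero]
            have hne : ¬ (r = s) := by rw [hrs]; omega
            rw [Finset.sum_congr rfl e2, Finset.sum_const_zero, if_neg hs0, if_neg hne]
            ring
          · -- s ≥ 2
            have hs2 : 2 ≤ (s : ℕ) := by omega
            have e2 : ∀ t ∈ Finset.range (n - 1),
                Arow k n hn lam ρ (r : ℕ) (t + 2) * Arow' k n hn lam ρ (t + 2) (s : ℕ)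
                = (Mm n k lam)⁻¹ (fidx n hn ((r : ℕ) - 2)) (fidx n hn t) *
                    Mm n k lam (fidx n hn t) (fidx n hn ((s : ℕ) - 2)) := by
              intro t ht
              have htlt : t < n - 1 := Finset.mem_range.mp ht
              have hρt : ρ (t + 1) ≠ 0 := rho_ne (t + 1) (by omega) (by omega)
              rw [hA2 _ _ hr0 hr1, hA'2, if_neg (by omega), if_neg (by omega),
                if_neg hs0, if_neg hs1]
              rw [show t + 2 - 2 = t from by omega, show t + 2 - 1 = t + 1 from by omega]
              rw [Bmat, hcancel _ _ _ hρt]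
            rw [Finset.sum_congr rfl e2]
            rw [← Fin.sum_univ_eq_sum_range
              (fun t => (Mm n k lam)⁻¹ (fidx n hn ((r : ℕ) - 2)) (fidx n hn t) *
                Mm n k lam (fidx n hn t) (fidx n hn ((s : ℕ) - 2))) (n - 1)]
            have e3 : ∀ j : Fin (n - 1),
                (Mm n k lam)⁻¹ (fidx n hn ((r : ℕ) - 2)) (fidx n hn (j : ℕ)) *
                  Mm n k lam (fidx n hn (j : ℕ)) (fidx n hn ((s : ℕ) - 2))
                = (Mm n k lam)⁻¹ (fidx n hn ((r : ℕ) - 2)) j *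
                  Mm n k lam j (fidx n hn ((s : ℕ) - 2)) := by
              intro j; rw [fidx_coe]
            rw [Finset.sum_congr rfl fun j _ => e3 j, key]
            have hiff : (fidx n hn ((r : ℕ) - 2) = fidx n hn ((s : ℕ) - 2)) ↔ r = s := by
              rw [Fin.ext_iff, fidx_val n hn (by omega), fidx_val n hn (by omega), hrs]
              omega
            rw [if_neg hs0]
            by_cases h : r = s
            · rw [if_pos (hiff.mpr h), if_pos h]; ring
            · rw [if_neg (fun hh => h (hiff.mp hh)), if_neg h]; ring
  have hA'A : A' * A = 1 := mul_eq_one_comm.mp hAA'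
  -- the row identity
  have hrule : ∀ r : Fin (n + 1), ∑ s : Fin (n + 1), A r s • v (s : ℕ) =
      if (r : ℕ) = 0 then 1
      else if (r : ℕ) = 1 then PowerSeries.X
      else Gser k n hn lam ((r : ℕ) - 2) := by
    intro r
    have hrlt := r.isLt
    apply PowerSeries.ext
    intro m
    rw [map_sum]
    have hc2 : ∀ s : Fin (n + 1), PowerSeries.coeff m (A r s • v (s : ℕ))
        = Arow k n hn lam ρ (r : ℕ) (s : ℕ) * PowerSeries.coeff m (v (s : ℕ)) := by
      intro s
      rw [show A r s = Arow k n hn lam ρ (r : ℕ) (s : ℕ) from rfl, PowerSeries.coeff_smul,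
        smul_eq_mul]
    rw [Finset.sum_congr rfl fun s _ => hc2 s]
    rw [Fin.sum_univ_eq_sum_range
      (fun s => Arow k n hn lam ρ (r : ℕ) s * PowerSeries.coeff m (v s)) (n + 1)]
    rw [hsplit]
    by_cases hr0 : (r : ℕ) = 0
    · rw [if_pos hr0]
      have e2 : ∀ t ∈ Finset.range (n - 1),
          Arow k n hn lam ρ (r : ℕ) (t + 2) * PowerSeries.coeff m (v (t + 2)) = 0 := by
        intro t _; rw [hA0 _ _ hr0, if_neg (by omega), zero_mul]
      rw [hA0 _ _ hr0, hA0 _ _ hr0, if_pos rfl, if_neg (by omega),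
        Finset.sum_congr rfl e2, Finset.sum_const_zero, hv0]
      ring
    · by_cases hr1 : (r : ℕ) = 1
      · rw [if_neg hr0, if_pos hr1]
        have e2 : ∀ t ∈ Finset.range (n - 1),
            Arow k n hn lam ρ (r : ℕ) (t + 2) * PowerSeries.coeff m (v (t + 2)) = 0 := by
          intro t _; rw [hA1 _ _ hr0 hr1, if_neg (by omega), zero_mul]
        rw [hA1 _ _ hr0 hr1, hA1 _ _ hr0 hr1, if_neg (by omega), if_pos rfl,
          Finset.sum_congr rfl e2, Finset.sum_const_zero, hv1]
        ring
      · -- r ≥ 2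
        have hr2 : 2 ≤ (r : ℕ) := by omega
        rw [if_neg hr0, if_neg hr1]
        have e0 : Arow k n hn lam ρ (r : ℕ) 0 = -(Sval k n hn lam ((r : ℕ) - 2)) := by
          rw [hA2 _ _ hr0 hr1, if_pos rfl]
        have e1 : Arow k n hn lam ρ (r : ℕ) 1 = 0 := by
          rw [hA2 _ _ hr0 hr1, if_neg (by omega), if_pos rfl]
        rw [e0, e1, zero_mul, hv0, PowerSeries.coeff_one]
        have hvt : ∀ t, t < n - 1 → PowerSeries.coeff m (v (t + 2))
            = if k ∣ m then ρ (t + 1) * (lam t)⁻¹ ^ (m / k) * genBinom ((k : ℂ))⁻¹ (m / k)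
              else 0 := by
          intro t ht
          have := hv (t + 1) (by omega) (by omega) m
          rw [show t + 1 + 1 = t + 2 from rfl] at this
          rw [this, hc]
          rw [show t + 1 - 1 = t from by omega]
        have hGco : PowerSeries.coeff m (Gser k n hn lam ((r : ℕ) - 2))
            = if k ∣ m then PowerSeries.coeff (m / k) (gser k n hn lam ((r : ℕ) - 2))
              else 0 := by
          simp only [Gser, PowerSeries.coeff_mk]
        rw [hGco]
        by_cases hkm : k ∣ m
        · rw [if_pos hkm]
          have e2 : ∀ t ∈ Finset.range (n - 1),
              Arow k n hn lam ρ (r : ℕ) (t + 2) * PowerSeries.coeff m (v (t + 2))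
              = Bmat k n hn lam ((r : ℕ) - 2) t * (lam t)⁻¹ ^ (m / k) *
                  genBinom ((k : ℂ))⁻¹ (m / k) := by
            intro t ht
            have htlt : t < n - 1 := Finset.mem_range.mp ht
            have hρt : ρ (t + 1) ≠ 0 := rho_ne (t + 1) (by omega) (by omega)
            rw [hA2 _ _ hr0 hr1, if_neg (by omega), if_neg (by omega), hvt t htlt,
              if_pos hkm]
            rw [show t + 2 - 2 = t from by omega, show t + 2 - 1 = t + 1 from by omega]
            rw [hcancel3 _ _ _ _ hρt]
          rw [Finset.sum_congr rfl e2]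
          rcases Nat.eq_zero_or_pos m with rfl | hm
          · rw [Nat.zero_div, hg0, if_pos rfl]
            have e3 : ∀ t ∈ Finset.range (n - 1),
                Bmat k n hn lam ((r : ℕ) - 2) t * (lam t)⁻¹ ^ 0 * genBinom ((k : ℂ))⁻¹ 0
                = Bmat k n hn lam ((r : ℕ) - 2) t := by
              intro t _
              rw [pow_zero, genBinom_zero, mul_one, mul_one]
            rw [Finset.sum_congr rfl e3, hSval]
            ring
          · have hq0 : m / k ≠ 0 := by
              rcases hkm with ⟨q, rfl⟩
              have : k * q / k = q := Nat.mul_div_cancel_left q (by omega)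
              rw [this]
              rintro rfl
              omega
            rw [if_neg (by omega), hgq _ _ hq0]
            rw [← Fin.sum_univ_eq_sum_range
              (fun t => Bmat k n hn lam ((r : ℕ) - 2) t * (lam t)⁻¹ ^ (m / k) *
                genBinom ((k : ℂ))⁻¹ (m / k)) (n - 1), ← Finset.sum_mul]
            ring
        · rw [if_neg hkm]
          have e2 : ∀ t ∈ Finset.range (n - 1),
              Arow k n hn lam ρ (r : ℕ) (t + 2) * PowerSeries.coeff m (v (t + 2)) = 0 := by
            intro t ht
            have htlt : t < n - 1 := Finset.mem_range.mp ht
            rw [hvt t htlt, if_neg hkm, mul_zero]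
          have hm0 : m ≠ 0 := by rintro rfl; exact hkm (dvd_zero k)
          rw [Finset.sum_congr rfl e2, Finset.sum_const_zero, if_neg hm0]
          ring
  -- assemble
  refine ⟨⟨A, A', hAA', hA'A⟩, fun i => i + 1, gser k n hn lam, Gser k n hn lam,
    rfl, rfl, fun i _ => by show i + 1 < (i + 1) + 1; omega, ?_, ?_, ?_, ?_⟩
  · intro i hi
    show (gser k n hn lam i).order = ((i + 1 : ℕ) : ℕ∞)
    rw [PowerSeries.order_eq_nat]
    constructor
    · rw [hgdelta i (i + 1) (by omega) (by omega) (by omega), if_pos rfl]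
      exact one_ne_zero
    · intro q hq
      rcases Nat.eq_zero_or_pos q with rfl | h
      · exact hg0 i
      · rw [hgdelta i q (by omega) h (by omega), if_neg (by omega)]
  · intro i hi
    show PowerSeries.coeff (i + 1) (gser k n hn lam i) = 1
    rw [hgdelta i (i + 1) (by omega) (by omega) (by omega), if_pos rfl]
  · intro i _ m
    simp only [Gser, PowerSeries.coeff_mk]
  · exact hrule
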